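/- arXiv:2010.03981 — 4 statements merged into one kernel-verified Lean document; each statement's English description precedes it below -/
import Mathlib

section
/- A tree T on n vertices has at most two center edges; moreover, T has two distinct center edges e_1 and e_2 if and only if e_1 and e_2 share a common endpoint z with n_z(e_1) = n_z(e_2) = ⌈n/2⌉. -/
namespace TreeOrder

attribute [local instance] Classical.propDecidable

variable {V : Type*} {W : Type*}

/-- `side G u v` = number of vertices strictly closer to `u` than to `v`;
for an edge `uv` of a tree this is the order of the component of `T - uv` containing `u`. -/
noncomputable def side [Fintype V] (G : SimpleGraph V) (u v : V) : ℕ :=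
  (Finset.univ.filter fun w => G.dist w u < G.dist w v).card

/-- `mu G u v = min (n_u(e), n_v(e))` for the edge `e = uv`. -/
noncomputable def mu [Fintype V] (G : SimpleGraph V) (u v : V) : ℕ :=
  min (side G u v) (side G v u)

/-- `mu` as a function on unordered pairs. -/
noncomputable def muE [Fintype V] (G : SimpleGraph V) : Sym2 V → ℕ :=
  Sym2.lift ⟨fun u v => mu G u v, fun _ _ => min_comm _ _⟩

/-- `r G i` = number of edges `e` of `G` with `μ(e) = i`. -/
noncomputable def r [Fintype V] (G : SimpleGraph V) (i : ℕ) : ℕ :=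
  (Finset.univ.filter fun e : Sym2 V => e ∈ G.edgeSet ∧ muE G e = i).card

/-- `tailSum G n k = Σ_{i=k}^{⌊n/2⌋} r_i(G)`. -/
noncomputable def tailSum [Fintype V] (G : SimpleGraph V) (n k : ℕ) : ℕ :=
  ∑ i ∈ Finset.Icc k (n / 2), r G i

/-- The order `⪯` on trees with `n` vertices, via edge division vectors. -/
def Preceq [Fintype V] [Fintype W] (n : ℕ) (G : SimpleGraph V) (H : SimpleGraph W) : Prop :=
  ∀ k, 1 ≤ k → k ≤ n / 2 → tailSum G n k ≤ tailSum H n k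

/-- The strict order `≺`. -/
def Prec [Fintype V] [Fintype W] (n : ℕ) (G : SimpleGraph V) (H : SimpleGraph W) : Prop :=
  Preceq n G H ∧ ∃ k, 1 ≤ k ∧ k ≤ n / 2 ∧ tailSum G n k < tailSum H n k

/-- Equality of edge division vectors `r(G) = r(H)`. -/
def SameEdgeDivision [Fintype V] [Fintype W] (n : ℕ) (G : SimpleGraph V)
    (H : SimpleGraph W) : Prop :=
  ∀ i, 1 ≤ i → i ≤ n / 2 → r G i = r H i

/-- `u` is a centroidal vertex: `n_u(e) ≥ n/2` for every edge `e` incident to `u`. -/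
def IsCentroidal [Fintype V] (G : SimpleGraph V) (u : V) : Prop :=
  ∀ v, G.Adj u v → Fintype.card V ≤ 2 * side G u v

/-- `u` is a proper centroidal vertex: `n_u(e) > ⌈n/2⌉` for every edge `e` incident to `u`. -/
def IsProperCentroidal [Fintype V] (G : SimpleGraph V) (u : V) : Prop :=
  ∀ v, G.Adj u v → (Fintype.card V + 1) / 2 < side G u v

/-- The edge `uv` is a center edge: `μ(uv) = ⌊n/2⌋`. -/
def IsCenterEdge [Fintype V] (G : SimpleGraph V) (u v : V) : Prop :=
  G.Adj u v ∧ mu G u v = Fintype.card V / 2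

/-- degree of a vertex -/
noncomputable def deg [Fintype V] (G : SimpleGraph V) (v : V) : ℕ :=
  (Finset.univ.filter fun w => G.Adj v w).card

/-- The path `P_n` on `n` vertices. -/
def pathG (n : ℕ) : SimpleGraph (Fin n) :=
  SimpleGraph.fromRel fun x y => (x : ℕ) + 1 = y

/-- The star `S_n` on `n` vertices. -/
def starG (n : ℕ) : SimpleGraph (Fin n) :=
  SimpleGraph.fromRel fun x _ => (x : ℕ) = 0

/-- The double star path `CP_{n;a,b}` : a path on `n - a - b` vertices (at positions
`a, …, n - b - 1`) with `a` pendent vertices attached to its first vertex and `b`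
pendent vertices attached to its last vertex. -/
def doubleStar (n a b : ℕ) : SimpleGraph (Fin n) :=
  SimpleGraph.fromRel fun x y =>
    ((x : ℕ) < a ∧ (y : ℕ) = a) ∨
    (a ≤ (x : ℕ) ∧ (x : ℕ) + 1 = y ∧ (y : ℕ) < n - b) ∨
    ((x : ℕ) = n - b - 1 ∧ n - b ≤ (y : ℕ))

/-- `CP_{n,k}^s` : a path `v_1 ⋯ v_k` (at positions `0, …, k-1`) with all
`n - k` pendent vertices attached to `v_s` (position `s - 1`). -/
def cpOne (n k s : ℕ) : SimpleGraph (Fin n) :=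
  SimpleGraph.fromRel fun x y =>
    ((x : ℕ) + 1 = y ∧ (y : ℕ) < k) ∨ ((x : ℕ) = s - 1 ∧ k ≤ (y : ℕ))

/-- The caterpillar `CP(n; n_1, …, n_k)` : a path `v_1 ⋯ v_k` (at positions `0, …, k-1`),
where pendent vertex `j` (for `k ≤ j < n`) is attached to the path vertex at
position `f j` (so `n_i = |{j : f j = i - 1}|`). -/
def caterpillar (n k : ℕ) (f : ℕ → ℕ) : SimpleGraph (Fin n) :=
  SimpleGraph.fromRel fun x y =>
    ((x : ℕ) + 1 = y ∧ (y : ℕ) < k) ∨ (k ≤ (y : ℕ) ∧ (x : ℕ) = f y)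

/-- The balanced starlike tree `SP_{n,q}` : the center is vertex `0`, and vertex
`j ≥ 1` lies on branch `(j - 1) % q` at depth `(j - 1)/q + 1`; so the `q` branches are
paths whose orders pairwise differ by at most `1`. -/
def balancedStar (n q : ℕ) : SimpleGraph (Fin n) :=
  SimpleGraph.fromRel fun x y =>
    ((x : ℕ) = 0 ∧ 1 ≤ (y : ℕ) ∧ (y : ℕ) ≤ q) ∨ (1 ≤ (x : ℕ) ∧ (x : ℕ) + q = y)

/-- The edge-moving transformation of `G` w.r.t. the edge `uv`: contract `uv` to `u`
(moving all edges at `v` to `u`) and attach `v` to `u` as a pendent vertex. -/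
def edgeMove (G : SimpleGraph V) (u v : V) : SimpleGraph V :=
  SimpleGraph.fromRel fun x y =>
    (G.Adj x y ∧ x ≠ v ∧ y ≠ v) ∨ (x = u ∧ y = v) ∨ (x = u ∧ G.Adj v y ∧ y ≠ u)

section Aux

open SimpleGraph

variable [Fintype V] {G : SimpleGraph V}

private lemma sym2_rep {α : Type*} (e : Sym2 α) : ∃ x y, e = s(x, y) :=
  Sym2.ind (fun x y => ⟨x, y, rfl⟩) e

private lemma path_length_eq_dist (hT : G.IsTree) {a b : V} (p : G.Walk a b) (hp : p.IsPath) :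
    p.length = G.dist a b := by
  obtain ⟨q, hq⟩ := hT.isConnected.exists_walk_length_eq_dist a b
  have h1 : G.dist a b ≤ p.length := SimpleGraph.dist_le p
  have h2 : q.bypass.IsPath := q.bypass_isPath
  have h3 : (⟨p, hp⟩ : G.Path a b) = ⟨q.bypass, h2⟩ := hT.IsAcyclic.path_unique _ _
  have h4 : p = q.bypass := congrArg Subtype.val h3
  have h5 : q.bypass.length ≤ q.length := q.length_bypass_le
  have h6 : p.length = q.bypass.length := by rw [h4]
  omega

private lemma adj_dist_dichotomy (hT : G.IsTree) {u v : V} (h : G.Adj u v) (w : V) :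
    G.dist w v = G.dist w u + 1 ∨ G.dist w u = G.dist w v + 1 := by
  obtain ⟨q, hq⟩ := hT.isConnected.exists_walk_length_eq_dist w u
  set p := q.bypass with hpdef
  have hp : p.IsPath := q.bypass_isPath
  have hplen : p.length = G.dist w u := path_length_eq_dist hT p hp
  by_cases hv : v ∈ p.support
  · right
    have l1 : (p.takeUntil v hv).length = G.dist w v :=
      path_length_eq_dist hT _ (hp.takeUntil hv)
    have l2 : (p.dropUntil v hv).length = G.dist v u :=
      path_length_eq_dist hT _ (hp.dropUntil hv)
    have l3 : G.dist v u = 1 := SimpleGraph.dist_eq_one_iff_adj.mpr h.symm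
    have l4 : (p.takeUntil v hv).length + (p.dropUntil v hv).length = p.length := by
      rw [← SimpleGraph.Walk.length_append, p.take_spec hv]
    omega
  · left
    have hp' : (p.concat h).IsPath := by
      rw [SimpleGraph.Walk.isPath_def, SimpleGraph.Walk.support_concat]
      exact List.Nodup.append hp.support_nodup (List.nodup_singleton v)
        (by simpa [List.disjoint_left] using hv)
    have l1 : (p.concat h).length = G.dist w v := path_length_eq_dist hT _ hp'
    have l2 : (p.concat h).length = p.length + 1 := SimpleGraph.Walk.length_concat _ _
    omega

private lemma dist_cross (hT : G.IsTree) {c d : V} (h : G.Adj c d) {w y : V}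
    (hw : G.dist w d < G.dist w c) (hy : G.dist y c < G.dist y d) :
    G.dist w y = G.dist w d + 1 + G.dist c y := by
  obtain ⟨q1', hq1'⟩ := hT.isConnected.exists_walk_length_eq_dist w d
  obtain ⟨q2', hq2'⟩ := hT.isConnected.exists_walk_length_eq_dist c y
  set q1 := q1'.bypass with hq1def
  set q2 := q2'.bypass with hq2def
  have hq1 : q1.IsPath := q1'.bypass_isPath
  have hq2 : q2.IsPath := q2'.bypass_isPath
  have hl1 : q1.length = G.dist w d := path_length_eq_dist hT q1 hq1
  have hl2 : q2.length = G.dist c y := path_length_eq_dist hT q2 hq2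
  have hwc : G.dist w c = G.dist w d + 1 := by
    rcases adj_dist_dichotomy hT h w with h1 | h1 <;> omega
  have hyd : G.dist y d = G.dist y c + 1 := by
    rcases adj_dist_dichotomy hT h y with h1 | h1 <;> omega
  have hsplit : ∀ {x a b : V} (p : G.Walk a b), p.IsPath → p.length = G.dist a b →
      ∀ hx : x ∈ p.support, G.dist a x + G.dist x b = G.dist a b := by
    intro x a b p hp hlen hx
    have l1 : (p.takeUntil x hx).length = G.dist a x :=
      path_length_eq_dist hT _ (hp.takeUntil hx)
    have l2 : (p.dropUntil x hx).length = G.dist x b :=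
      path_length_eq_dist hT _ (hp.dropUntil hx)
    have l4 : (p.takeUntil x hx).length + (p.dropUntil x hx).length = p.length := by
      rw [← SimpleGraph.Walk.length_append, p.take_spec hx]
    omega
  have hq1side : ∀ x ∈ q1.support, G.dist x d < G.dist x c := by
    intro x hx
    have h1 : G.dist w x + G.dist x d = G.dist w d := hsplit q1 hq1 hl1 hx
    have h2 : G.dist w c ≤ G.dist w x + G.dist x c := hT.isConnected.dist_triangle
    omega
  have hq2side : ∀ x ∈ q2.support, G.dist x c < G.dist x d := by
    intro x hx
    have h1 : G.dist c x + G.dist x y = G.dist c y := hsplit q2 hq2 hl2 hx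
    have h2 : G.dist y d ≤ G.dist y x + G.dist x d := hT.isConnected.dist_triangle
    have h3 : G.dist y x = G.dist x y := SimpleGraph.dist_comm
    have h4 : G.dist c x = G.dist x c := SimpleGraph.dist_comm
    have h5 : G.dist y c = G.dist c y := SimpleGraph.dist_comm
    omega
  set r : G.Walk w y := q1.append (SimpleGraph.Walk.cons h.symm q2) with hrdef
  have hr : r.IsPath := by
    rw [SimpleGraph.Walk.isPath_def, hrdef, SimpleGraph.Walk.support_append,
      SimpleGraph.Walk.support_cons, List.tail_cons]
    refine List.Nodup.append hq1.support_nodup hq2.support_nodup ?_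
    intro x hx1 hx2
    have := hq1side x hx1
    have := hq2side x hx2
    omega
  have hrlen : r.length = G.dist w y := path_length_eq_dist hT r hr
  have : r.length = q1.length + (q2.length + 1) := by
    rw [hrdef, SimpleGraph.Walk.length_append, SimpleGraph.Walk.length_cons]
  omega

private lemma side_add (hT : G.IsTree) {u v : V} (h : G.Adj u v) :
    side G u v + side G v u = Fintype.card V := by
  have hfil : (Finset.univ.filter fun w => G.dist w v < G.dist w u)
      = Finset.univ.filter fun w => ¬ G.dist w u < G.dist w v := by
    ext w
    simp only [Finset.mem_filter, Finset.mem_univ, true_and]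
    rcases adj_dist_dichotomy hT h w with h1 | h1 <;> omega
  unfold side
  rw [hfil, Finset.card_filter_add_card_filter_not, Finset.card_univ]

private lemma same_side (hT : G.IsTree) {u v c d : V} (huv : G.Adj u v) (hcd : G.Adj c d)
    (hne : s(u, v) ≠ s(c, d)) (hu : G.dist u c < G.dist u d) :
    G.dist v c < G.dist v d := by
  rcases adj_dist_dichotomy hT hcd v with hv | hv
  · omega
  · exfalso
    have hcross : G.dist v u = G.dist v d + 1 + G.dist c u :=
      dist_cross hT hcd (by omega) hu
    have h1 : G.dist v u = 1 := SimpleGraph.dist_eq_one_iff_adj.mpr huv.symm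
    have h2 : G.dist v d = 0 := by omega
    have h3 : G.dist c u = 0 := by omega
    have h4 : v = d := hT.isConnected.dist_eq_zero_iff.mp h2
    have h5 : c = u := hT.isConnected.dist_eq_zero_iff.mp h3
    exact hne (by rw [h4, ← h5])

private lemma mu_ge (hm : mu G u v = Fintype.card V / 2) :
    Fintype.card V / 2 ≤ side G u v ∧ Fintype.card V / 2 ≤ side G v u := by
  have h1 : min (side G u v) (side G v u) = Fintype.card V / 2 := hm
  constructor
  · exact h1 ▸ min_le_left _ _
  · exact h1 ▸ min_le_right _ _

/-- The fully oriented core lemma. -/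
private lemma core (hT : G.IsTree) {u v c d : V} (huv : G.Adj u v) (hcd : G.Adj c d)
    (hne : s(u, v) ≠ s(c, d))
    (h1 : mu G u v = Fintype.card V / 2) (h2 : mu G c d = Fintype.card V / 2)
    (hu : G.dist u c < G.dist u d) (hc : G.dist c v < G.dist c u) :
    v = c ∧ side G v u = (Fintype.card V + 1) / 2 ∧
      side G c d = (Fintype.card V + 1) / 2 := by
  have hv2 : G.dist v c < G.dist v d := same_side hT huv hcd hne hu
  set A : Finset V := Finset.univ.filter fun w => G.dist w u < G.dist w v with hA
  set D : Finset V := Finset.univ.filter fun w => G.dist w d < G.dist w c with hD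
  have hAcard : A.card = side G u v := rfl
  have hDcard : D.card = side G d c := rfl
  have hdisj : Disjoint A D := by
    rw [Finset.disjoint_left]
    intro x hxA hxD
    simp only [hA, hD, Finset.mem_filter, Finset.mem_univ, true_and] at hxA hxD
    have e1 : G.dist x u = G.dist x d + 1 + G.dist c u := dist_cross hT hcd hxD hu
    have e2 : G.dist x v = G.dist x d + 1 + G.dist c v := dist_cross hT hcd hxD hv2
    omega
  have hvA : v ∉ A := by
    simp only [hA, Finset.mem_filter, Finset.mem_univ, true_and, not_lt]
    have : G.dist v v = 0 := SimpleGraph.dist_self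
    omega
  have hvD : v ∉ D := by
    simp only [hD, Finset.mem_filter, Finset.mem_univ, true_and, not_lt]
    omega
  have hs1 := side_add hT huv
  have hs2 := side_add hT hcd
  have hm1 := (mu_ge h1).1
  have hm2 := (mu_ge h2).2
  have hvc : v = c := by
    by_contra hvc
    have hcA : c ∉ A := by
      simp only [hA, Finset.mem_filter, Finset.mem_univ, true_and, not_lt]
      omega
    have hcD : c ∉ D := by
      simp only [hD, Finset.mem_filter, Finset.mem_univ, true_and, not_lt]
      have : G.dist c c = 0 := SimpleGraph.dist_self
      omega
    have hdisj2 : Disjoint (A ∪ D) ({v, c} : Finset V) := by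
      rw [Finset.disjoint_right]
      intro x hx
      simp only [Finset.mem_insert, Finset.mem_singleton] at hx
      rcases hx with rfl | rfl <;> simp [Finset.mem_union, hvA, hvD, hcA, hcD]
    have hle : (A ∪ D ∪ {v, c}).card ≤ Fintype.card V := by
      rw [← Finset.card_univ]; exact Finset.card_le_card (Finset.subset_univ _)
    rw [Finset.card_union_of_disjoint hdisj2, Finset.card_union_of_disjoint hdisj,
      Finset.card_pair hvc, hAcard, hDcard] at hle
    omega
  have hdisj2 : Disjoint (A ∪ D) ({v} : Finset V) := by
    rw [Finset.disjoint_right]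
    intro x hx
    simp only [Finset.mem_singleton] at hx
    subst hx
    simp [Finset.mem_union, hvA, hvD]
  have hle : (A ∪ D ∪ {v}).card ≤ Fintype.card V := by
    rw [← Finset.card_univ]; exact Finset.card_le_card (Finset.subset_univ _)
  rw [Finset.card_union_of_disjoint hdisj2, Finset.card_union_of_disjoint hdisj,
    Finset.card_singleton, hAcard, hDcard] at hle
  subst hvc
  refine ⟨rfl, by omega, by omega⟩

private lemma mu_swap (h : mu G u v = k) : mu G v u = k := by
  have h1 : min (side G u v) (side G v u) = k := h
  show min (side G v u) (side G u v) = k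
  rw [min_comm]; exact h1

/-- Core with only the side of `u` w.r.t. `cd` fixed. -/
private lemma core2 (hT : G.IsTree) {u v c d : V} (huv : G.Adj u v) (hcd : G.Adj c d)
    (hne : s(u, v) ≠ s(c, d))
    (h1 : mu G u v = Fintype.card V / 2) (h2 : mu G c d = Fintype.card V / 2)
    (hu : G.dist u c < G.dist u d) :
    ∃ z a b : V, s(u, v) = s(z, a) ∧ s(c, d) = s(z, b) ∧ G.Adj z a ∧ G.Adj z b ∧
      side G z a = (Fintype.card V + 1) / 2 ∧ side G z b = (Fintype.card V + 1) / 2 := by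
  rcases adj_dist_dichotomy hT huv c with hcc | hcc
  · -- G.dist c v = G.dist c u + 1, i.e. c is on the u-side: swap u and v
    have hv2 : G.dist v c < G.dist v d := same_side hT huv hcd hne hu
    have hne' : s(v, u) ≠ s(c, d) := fun h => hne (Sym2.eq_swap.trans h)
    obtain ⟨huc, hside1, hside2⟩ :=
      core hT huv.symm hcd hne' (mu_swap h1) h2 hv2 (by omega)
    subst huc
    exact ⟨u, v, d, rfl, rfl, huv, hcd, hside1, hside2⟩
  · -- c is on the v-side
    obtain ⟨hvc, hside1, hside2⟩ := core hT huv hcd hne h1 h2 hu (by omega)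
    subst hvc
    exact ⟨v, u, d, Sym2.eq_swap, rfl, huv.symm, hcd, hside1, hside2⟩

/-- Two distinct center edges share an endpoint `z`, and both `z`-sides are `⌈n/2⌉`. -/
private lemma core3 (hT : G.IsTree) {u v c d : V} (huv : G.Adj u v) (hcd : G.Adj c d)
    (hne : s(u, v) ≠ s(c, d))
    (h1 : mu G u v = Fintype.card V / 2) (h2 : mu G c d = Fintype.card V / 2) :
    ∃ z a b : V, s(u, v) = s(z, a) ∧ s(c, d) = s(z, b) ∧ G.Adj z a ∧ G.Adj z b ∧
      side G z a = (Fintype.card V + 1) / 2 ∧ side G z b = (Fintype.card V + 1) / 2 := by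
  rcases adj_dist_dichotomy hT hcd u with hud | hud
  · -- G.dist u d = G.dist u c + 1 : u on c-side
    exact core2 hT huv hcd hne h1 h2 (by omega)
  · -- u on d-side: swap c and d
    have hne' : s(u, v) ≠ s(d, c) := fun h => hne (h.trans Sym2.eq_swap)
    obtain ⟨z, a, b, e1, e2, e3, e4, e5, e6⟩ :=
      core2 hT huv hcd.symm hne' h1 (mu_swap h2) (by omega)
    exact ⟨z, a, b, e1, Sym2.eq_swap.trans e2, e3, e4, e5, e6⟩

private lemma branch_disjoint (hT : G.IsTree) {z a b : V} (hza : G.Adj z a) (hzb : G.Adj z b)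
    (hab : a ≠ b) (x : V) (hxa : G.dist x a < G.dist x z) (hxb : G.dist x b < G.dist x z) :
    False := by
  have h1 : G.dist b z = 1 := SimpleGraph.dist_eq_one_iff_adj.mpr hzb.symm
  have h2 : G.dist b a ≠ 0 := by
    intro h0
    exact hab (hT.isConnected.dist_eq_zero_iff.mp h0).symm
  have h3 : G.dist b z < G.dist b a := by
    rcases adj_dist_dichotomy hT hza b with hh | hh <;> omega
  have h4 : G.dist x b = G.dist x a + 1 + G.dist z b :=
    dist_cross hT hza hxa h3
  have h5 : G.dist z b = 1 := SimpleGraph.dist_eq_one_iff_adj.mpr hzb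
  have h6 : G.dist x z = G.dist x a + 1 := by
    rcases adj_dist_dichotomy hT hza x with hh | hh <;> omega
  omega

private lemma side_pos {z a : V} (h : G.Adj a z) : 1 ≤ side G a z := by
  refine Finset.card_pos.mpr ⟨a, Finset.mem_filter.mpr ⟨Finset.mem_univ _, ?_⟩⟩
  have h1 : G.dist a a = 0 := SimpleGraph.dist_self
  have h2 : G.dist a z = 1 := SimpleGraph.dist_eq_one_iff_adj.mpr h
  omega

/-- Two disjoint branches plus the center. -/
private lemma two_branches (hT : G.IsTree) {z a b : V} (hza : G.Adj z a) (hzb : G.Adj z b)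
    (hab : a ≠ b) : side G a z + side G b z + 1 ≤ Fintype.card V := by
  set A : Finset V := Finset.univ.filter fun w => G.dist w a < G.dist w z with hA
  set B : Finset V := Finset.univ.filter fun w => G.dist w b < G.dist w z with hB
  have hdisj : Disjoint A B := by
    rw [Finset.disjoint_left]
    intro x hxA hxB
    simp only [hA, hB, Finset.mem_filter, Finset.mem_univ, true_and] at hxA hxB
    exact branch_disjoint hT hza hzb hab x hxA hxB
  have hzA : z ∉ A := by
    simp only [hA, Finset.mem_filter, Finset.mem_univ, true_and, not_lt]
    have : G.dist z z = 0 := SimpleGraph.dist_self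
    omega
  have hzB : z ∉ B := by
    simp only [hB, Finset.mem_filter, Finset.mem_univ, true_and, not_lt]
    have : G.dist z z = 0 := SimpleGraph.dist_self
    omega
  have hdisj2 : Disjoint (A ∪ B) ({z} : Finset V) := by
    rw [Finset.disjoint_right]
    intro x hx
    simp only [Finset.mem_singleton] at hx
    subst hx
    simp [Finset.mem_union, hzA, hzB]
  have hle : (A ∪ B ∪ {z}).card ≤ Fintype.card V := by
    rw [← Finset.card_univ]; exact Finset.card_le_card (Finset.subset_univ _)
  rw [Finset.card_union_of_disjoint hdisj2, Finset.card_union_of_disjoint hdisj,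
    Finset.card_singleton] at hle
  exact hle

/-- Three disjoint branches plus the center. -/
private lemma three_branches (hT : G.IsTree) {z a b c : V} (hza : G.Adj z a)
    (hzb : G.Adj z b) (hzc : G.Adj z c) (hab : a ≠ b) (hac : a ≠ c) (hbc : b ≠ c) :
    side G a z + side G b z + side G c z + 1 ≤ Fintype.card V := by
  set A : Finset V := Finset.univ.filter fun w => G.dist w a < G.dist w z with hA
  set B : Finset V := Finset.univ.filter fun w => G.dist w b < G.dist w z with hB
  set C : Finset V := Finset.univ.filter fun w => G.dist w c < G.dist w z with hC
  have hdAB : Disjoint A B := by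
    rw [Finset.disjoint_left]
    intro x hxA hxB
    simp only [hA, hB, Finset.mem_filter, Finset.mem_univ, true_and] at hxA hxB
    exact branch_disjoint hT hza hzb hab x hxA hxB
  have hdAC : Disjoint A C := by
    rw [Finset.disjoint_left]
    intro x hxA hxC
    simp only [hA, hC, Finset.mem_filter, Finset.mem_univ, true_and] at hxA hxC
    exact branch_disjoint hT hza hzc hac x hxA hxC
  have hdBC : Disjoint B C := by
    rw [Finset.disjoint_left]
    intro x hxB hxC
    simp only [hB, hC, Finset.mem_filter, Finset.mem_univ, true_and] at hxB hxC
    exact branch_disjoint hT hzb hzc hbc x hxB hxC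
  have hz0 : G.dist z z = 0 := SimpleGraph.dist_self
  have hzA : z ∉ A := by
    simp only [hA, Finset.mem_filter, Finset.mem_univ, true_and, not_lt]; omega
  have hzB : z ∉ B := by
    simp only [hB, Finset.mem_filter, Finset.mem_univ, true_and, not_lt]; omega
  have hzC : z ∉ C := by
    simp only [hC, Finset.mem_filter, Finset.mem_univ, true_and, not_lt]; omega
  have hd1 : Disjoint (A ∪ B) C := by
    rw [Finset.disjoint_left]
    intro x hx hxC
    rcases Finset.mem_union.mp hx with hxA | hxB
    · exact Finset.disjoint_left.mp hdAC hxA hxC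
    · exact Finset.disjoint_left.mp hdBC hxB hxC
  have hd2 : Disjoint (A ∪ B ∪ C) ({z} : Finset V) := by
    rw [Finset.disjoint_right]
    intro x hx
    simp only [Finset.mem_singleton] at hx
    subst hx
    simp [Finset.mem_union, hzA, hzB, hzC]
  have hle : (A ∪ B ∪ C ∪ {z}).card ≤ Fintype.card V := by
    rw [← Finset.card_univ]; exact Finset.card_le_card (Finset.subset_univ _)
  rw [Finset.card_union_of_disjoint hd2, Finset.card_union_of_disjoint hd1,
    Finset.card_union_of_disjoint hdAB, Finset.card_singleton] at hle
  exact hle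

private lemma adj_of_sym2_eq {u v z a : V} (h : s(u, v) = s(z, a)) (huv : G.Adj u v) :
    G.Adj z a := by
  rcases Sym2.eq_iff.mp h with ⟨rfl, rfl⟩ | ⟨rfl, rfl⟩
  · exact huv
  · exact huv.symm

private lemma mu_of_sym2_eq {u v z a : V} (h : s(u, v) = s(z, a)) :
    mu G u v = mu G z a := by
  rcases Sym2.eq_iff.mp h with ⟨rfl, rfl⟩ | ⟨rfl, rfl⟩
  · rfl
  · show min (side G u v) (side G v u) = min (side G v u) (side G u v)
    exact min_comm _ _

end Aux

/-- A tree on `n` vertices has at most two center edges; moreover it has two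
distinct center edges `e₁, e₂` iff they share a common endpoint `z` with
`n_z(e₁) = n_z(e₂) = ⌈n/2⌉`. -/
theorem stmt3 {V : Type*} [Fintype V] (G : SimpleGraph V) (hT : G.IsTree) :
    (Finset.univ.filter fun e : Sym2 V =>
        e ∈ G.edgeSet ∧ muE G e = Fintype.card V / 2).card ≤ 2 ∧
    ∀ u₁ v₁ u₂ v₂ : V, G.Adj u₁ v₁ → G.Adj u₂ v₂ → s(u₁, v₁) ≠ s(u₂, v₂) →
      ((IsCenterEdge G u₁ v₁ ∧ IsCenterEdge G u₂ v₂) ↔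
        ∃ z x₁ x₂ : V, s(u₁, v₁) = s(z, x₁) ∧ s(u₂, v₂) = s(z, x₂) ∧
          side G z x₁ = (Fintype.card V + 1) / 2 ∧
          side G z x₂ = (Fintype.card V + 1) / 2) := by
  classical
  have hback : ∀ u₁ v₁ : V, G.Adj u₁ v₁ → ∀ z x₁ : V, s(u₁, v₁) = s(z, x₁) →
      side G z x₁ = (Fintype.card V + 1) / 2 → IsCenterEdge G u₁ v₁ := by
    intro u1 v1 h1 z x1 hs hside
    have hzx : G.Adj z x1 := adj_of_sym2_eq hs h1
    have hsum := side_add hT hzx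
    have hx1 : side G x1 z = Fintype.card V / 2 := by omega
    refine ⟨h1, ?_⟩
    rw [mu_of_sym2_eq hs]
    show min (side G z x1) (side G x1 z) = Fintype.card V / 2
    rw [hside, hx1]
    exact min_eq_right (by omega)
  constructor
  · by_contra hcard
    push_neg at hcard
    rw [Finset.two_lt_card] at hcard
    obtain ⟨e1, he1, e2, he2, e3, he3, h12, h13, h23⟩ := hcard
    obtain ⟨u1, v1, rfl⟩ := sym2_rep e1
    obtain ⟨u2, v2, rfl⟩ := sym2_rep e2
    obtain ⟨u3, v3, rfl⟩ := sym2_rep e3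
    rw [Finset.mem_filter] at he1 he2 he3
    have hadj1 : G.Adj u1 v1 := (G.mem_edgeSet).mp he1.2.1
    have hadj2 : G.Adj u2 v2 := (G.mem_edgeSet).mp he2.2.1
    have hadj3 : G.Adj u3 v3 := (G.mem_edgeSet).mp he3.2.1
    have hmu1 : mu G u1 v1 = Fintype.card V / 2 := by simpa [muE] using he1.2.2
    have hmu2 : mu G u2 v2 = Fintype.card V / 2 := by simpa [muE] using he2.2.2
    have hmu3 : mu G u3 v3 = Fintype.card V / 2 := by simpa [muE] using he3.2.2
    obtain ⟨z, a, b, s1, s2, hza, hzb, sa, sb⟩ := core3 hT hadj1 hadj2 h12 hmu1 hmu2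
    obtain ⟨z', a', b', s1', s2', hza', hzb', sa', sb'⟩ := core3 hT hadj2 hadj3 h23 hmu2 hmu3
    have hab : a ≠ b := by rintro rfl; exact h12 (s1.trans s2.symm)
    have hsum_a := side_add hT hza
    have hsum_b := side_add hT hzb
    have hodd := two_branches hT hza hzb hab
    have h2q : 2 * ((Fintype.card V + 1) / 2) = Fintype.card V + 1 := by omega
    have hkey : s(z, b) = s(z', a') := s2.symm.trans s1'
    rcases Sym2.eq_iff.mp hkey with ⟨hzz, hba⟩ | ⟨hza'', hbz'⟩
    · -- common endpoint z = z' for all three edges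
      subst hzz; subst hba
      have hbb' : b ≠ b' := by rintro rfl; exact h23 (s2.trans s2'.symm)
      have hab' : a ≠ b' := by rintro rfl; exact h13 (s1.trans s2'.symm)
      have hsum_b' := side_add hT hzb'
      have hthree := three_branches hT hza hzb hzb' hab hab' hbb'
      have hpos : 1 ≤ side G a z := side_pos hza.symm
      omega
    · -- the two shared endpoints are the two ends of e2
      subst hza''; subst hbz'
      omega
  · intro u1 v1 u2 v2 h1 h2 hne
    constructor
    · rintro ⟨⟨-, hm1⟩, ⟨-, hm2⟩⟩
      obtain ⟨z, a, b, s1, s2, _, _, sa, sb⟩ := core3 hT h1 h2 hne hm1 hm2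
      exact ⟨z, a, b, s1, s2, sa, sb⟩
    · rintro ⟨z, x1, x2, hs1, hs2, hside1, hside2⟩
      exact ⟨hback u1 v1 h1 z x1 hs1 hside1, hback u2 v2 h2 z x2 hs2 hside2⟩

end TreeOrder
end

section
/- Suppose the trees T and T' on n vertices are (φ,μ)-similar with respect to an edge e_1 ∈ E(T), and let e_1' = φ(e_1). Then: (1) if μ_T(e_1) < μ_{T'}(e_1') then T ≺ T'; (2) if μ_T(e_1) > μ_{T'}(e_1') then T ≻ T'; (3) if μ_T(e_1) = μ_{T'}(e_1') then r(T) = r(T'). -/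
namespace TreeOrder

attribute [local instance] Classical.propDecidable

variable {V : Type*} {W : Type*}

/-! ### Auxiliary lemmas -/

lemma mu_le_half [Fintype V] (G : SimpleGraph V) (u v : V) :
    mu G u v ≤ Fintype.card V / 2 := by
  classical
  have hdisj : Disjoint (Finset.univ.filter fun w => G.dist w u < G.dist w v)
      (Finset.univ.filter fun w => G.dist w v < G.dist w u) := by
    rw [Finset.disjoint_filter]
    intro x _ h1 h2
    omega
  have hsum : side G u v + side G v u ≤ Fintype.card V := by
    rw [side, side, ← Finset.card_union_of_disjoint hdisj, ← Finset.card_univ]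
    exact Finset.card_le_univ _
  rw [mu]
  omega

lemma muE_le_half [Fintype V] (G : SimpleGraph V) (e : Sym2 V) :
    muE G e ≤ Fintype.card V / 2 := by
  induction e using Sym2.ind with
  | _ u v => simpa [muE] using mu_le_half G u v

lemma r_eq [Fintype V] (G : SimpleGraph V) (i : ℕ) :
    r G i = (Finset.univ.filter fun e : G.edgeSet => muE G (e : Sym2 V) = i).card := by
  classical
  rw [r]
  refine Finset.card_bij' (fun e he => (⟨e, (Finset.mem_filter.mp he).2.1⟩ : G.edgeSet))
      (fun e _ => (e : Sym2 V)) (fun e he => ?_) (fun e he => ?_)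
      (fun e he => rfl) (fun e he => rfl)
  · simp only [Finset.mem_filter, Finset.mem_univ, true_and]
    exact (Finset.mem_filter.mp he).2.2
  · simp only [Finset.mem_filter, Finset.mem_univ, true_and] at he ⊢
    exact ⟨e.2, he⟩

lemma sum_filter_count {α : Type*} [Fintype α] [DecidableEq α] (f : α → ℕ) (s : Finset ℕ) :
    ∑ i ∈ s, (Finset.univ.filter fun a => f a = i).card
      = (Finset.univ.filter fun a => f a ∈ s).card := by
  classical
  induction s using Finset.induction with
  | empty => simp
  | @insert i s hi ih =>
    rw [Finset.sum_insert hi, ih]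
    have hdisj : Disjoint (Finset.univ.filter fun a => f a = i)
        (Finset.univ.filter fun a => f a ∈ s) := by
      rw [Finset.disjoint_filter]
      intro x _ h1 h2
      exact hi (h1 ▸ h2)
    rw [← Finset.card_union_of_disjoint hdisj]
    congr 1
    ext a
    simp [Finset.mem_insert]

lemma tailSum_eq [Fintype V] (G : SimpleGraph V) (n k : ℕ) :
    tailSum G n k
      = (Finset.univ.filter fun e : G.edgeSet =>
          muE G (e : Sym2 V) ∈ Finset.Icc k (n / 2)).card := by
  classical
  rw [tailSum]
  simp only [r_eq]
  exact sum_filter_count _ _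

lemma prec_of_lt {V W : Type*} [Fintype V] [Fintype W]
    (G : SimpleGraph V) (H : SimpleGraph W)
    (hcard : Fintype.card W = Fintype.card V)
    (φ : G.edgeSet ≃ H.edgeSet) (e₁ : G.edgeSet)
    (hsim : ∀ e : G.edgeSet, e ≠ e₁ → muE G (e : Sym2 V) = muE H ((φ e : Sym2 W)))
    (hlt : muE G (e₁ : Sym2 V) < muE H ((φ e₁ : Sym2 W))) :
    Prec (Fintype.card V) G H := by
  classical
  set n := Fintype.card V with hn
  have hb : muE H ((φ e₁ : Sym2 W)) ≤ n / 2 := by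
    have := muE_le_half H (φ e₁ : Sym2 W)
    rwa [hcard] at this
  have htrans : ∀ k, tailSum H n k
      = (Finset.univ.filter fun e : G.edgeSet =>
          muE H ((φ e : Sym2 W)) ∈ Finset.Icc k (n / 2)).card := by
    intro k
    rw [tailSum_eq]
    exact (Finset.card_equiv φ (by intro e; simp)).symm
  have hsub : ∀ k,
      (Finset.univ.filter fun e : G.edgeSet =>
          muE G (e : Sym2 V) ∈ Finset.Icc k (n / 2))
      ⊆ (Finset.univ.filter fun e : G.edgeSet =>
          muE H ((φ e : Sym2 W)) ∈ Finset.Icc k (n / 2)) := by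
    intro k e he
    simp only [Finset.mem_filter, Finset.mem_univ, true_and, Finset.mem_Icc] at he ⊢
    by_cases h : e = e₁
    · subst h
      exact ⟨le_trans he.1 hlt.le, hb⟩
    · rwa [← hsim e h]
  constructor
  · intro k _ _
    rw [tailSum_eq, htrans]
    exact Finset.card_le_card (hsub k)
  · refine ⟨muE H ((φ e₁ : Sym2 W)), by omega, hb, ?_⟩
    rw [tailSum_eq, htrans]
    apply Finset.card_lt_card
    refine ⟨hsub _, fun hall => ?_⟩
    have h1 : e₁ ∈ (Finset.univ.filter fun e : G.edgeSet =>
        muE H ((φ e : Sym2 W)) ∈ Finset.Icc (muE H ((φ e₁ : Sym2 W))) (n / 2)) := by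
      simp only [Finset.mem_filter, Finset.mem_univ, true_and, Finset.mem_Icc]
      exact ⟨le_refl _, hb⟩
    have h2 := hall h1
    simp only [Finset.mem_filter, Finset.mem_univ, true_and, Finset.mem_Icc] at h2
    omega

/-- If trees `T, T'` on `n` vertices are `(φ,μ)`-similar with respect to
`e₁ ∈ E(T)` and `e₁' = φ(e₁)`, then (1) `μ_T(e₁) < μ_{T'}(e₁')` implies `T ≺ T'`;
(2) `μ_T(e₁) > μ_{T'}(e₁')` implies `T ≻ T'`; (3) `μ_T(e₁) = μ_{T'}(e₁')` implies
`r(T) = r(T')`. -/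
theorem stmt7 {V W : Type*} [Fintype V] [Fintype W]
    (G : SimpleGraph V) (H : SimpleGraph W) (hG : G.IsTree) (hH : H.IsTree)
    (hcard : Fintype.card W = Fintype.card V)
    (φ : G.edgeSet ≃ H.edgeSet) (e₁ : G.edgeSet)
    (hsim : ∀ e : G.edgeSet, e ≠ e₁ → muE G (e : Sym2 V) = muE H ((φ e : Sym2 W))) :
    (muE G (e₁ : Sym2 V) < muE H ((φ e₁ : Sym2 W)) → Prec (Fintype.card V) G H) ∧
    (muE H ((φ e₁ : Sym2 W)) < muE G (e₁ : Sym2 V) → Prec (Fintype.card V) H G) ∧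
    (muE G (e₁ : Sym2 V) = muE H ((φ e₁ : Sym2 W)) →
      SameEdgeDivision (Fintype.card V) G H) := by
  classical
  have hsim' : ∀ f : H.edgeSet, f ≠ φ e₁ →
      muE H (f : Sym2 W) = muE G ((φ.symm f : Sym2 V)) := by
    intro f hf
    have := hsim (φ.symm f) (by
      intro h
      apply hf
      rw [← h, Equiv.apply_symm_apply])
    simpa using this.symm
  refine ⟨fun hlt => prec_of_lt G H hcard φ e₁ hsim hlt, fun hlt => ?_, fun heq => ?_⟩
  · have h2 : muE H ((φ e₁ : Sym2 W)) <
        muE G ((φ.symm (φ e₁) : Sym2 V)) := by simpa using hlt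
    have := prec_of_lt H G hcard.symm φ.symm (φ e₁) hsim' h2
    rwa [hcard] at this
  · intro i _ _
    rw [r_eq, r_eq]
    apply Finset.card_equiv φ
    intro e
    simp only [Finset.mem_filter, Finset.mem_univ, true_and]
    by_cases h : e = e₁
    · subst h; rw [heq]
    · rw [hsim e h]

end TreeOrder
end

section
/- Let n = n_1 + n_k + k with k ≥ 2, 1 ≤ n_1 and n_1 + 2 ≤ n_k. Then CP_{n;n_1,n_k} ≺ CP_{n;n_1+1,n_k−1}. -/
namespace TreeOrder

attribute [local instance] Classical.propDecidable

variable {V : Type*} {W : Type*}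

set_option linter.unusedTactic false
set_option linter.unreachableTactic false
set_option linter.unnecessarySeqFocus false
set_option maxHeartbeats 1000000

lemma mem_support_of_cut {G : SimpleGraph V} {S : V → Prop} {u : V}
    (cut : ∀ x y, G.Adj x y → S x → ¬ S y → x = u) :
    ∀ {w v : V} (p : G.Walk w v), S w → ¬ S v → u ∈ p.support := by
  intro w v p
  induction p with
  | nil => intro h h'; exact absurd h h'
  | @cons w m v h q ih =>
    intro hw hv
    by_cases hm : S m
    · simp only [SimpleGraph.Walk.support_cons, List.mem_cons]
      exact Or.inr (ih hm hv)
    · have := cut _ _ h hw hm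
      simp [← this, SimpleGraph.Walk.support_cons]

lemma dist_lt_dist_of_cut {G : SimpleGraph V} (hc : G.Connected) {S : V → Prop} {u v : V}
    (hu : S u) (hv : ¬ S v)
    (cut : ∀ x y, G.Adj x y → S x → ¬ S y → x = u ∧ y = v)
    {w : V} (hw : S w) : G.dist w u < G.dist w v := by
  obtain ⟨p, hp⟩ := hc.exists_walk_length_eq_dist w v
  have cut' : ∀ x y, G.Adj x y → S x → ¬ S y → x = u := fun x y h hx hy => (cut x y h hx hy).1
  have hmem : u ∈ p.support := mem_support_of_cut cut' p hw hv
  have h1 : G.dist w u ≤ (p.takeUntil u hmem).length := SimpleGraph.dist_le _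
  have h2 := congr_arg SimpleGraph.Walk.length (p.take_spec hmem)
  rw [SimpleGraph.Walk.length_append] at h2
  have huv : u ≠ v := fun h => hv (h ▸ hu)
  have h3 : (p.dropUntil u hmem).length ≠ 0 := fun h =>
    huv (SimpleGraph.Walk.eq_of_length_eq_zero h)
  omega

lemma side_eq_card_of_cut [Fintype V] {G : SimpleGraph V} (hc : G.Connected) {S : Finset V}
    {u v : V} (hu : u ∈ S) (hv : v ∉ S)
    (cut : ∀ x y, G.Adj x y → x ∈ S → y ∉ S → x = u ∧ y = v) :
    side G u v = S.card := by
  unfold side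
  congr 1
  ext w
  simp only [Finset.mem_filter, Finset.mem_univ, true_and]
  constructor
  · intro h
    by_contra hw
    have cut2 : ∀ x y, G.Adj x y → x ∉ S → ¬ (y ∉ S) → x = v ∧ y = u := by
      intro x y hxy hx hy
      push_neg at hy
      obtain ⟨h1, h2⟩ := cut y x hxy.symm hy hx
      exact ⟨h2, h1⟩
    have := dist_lt_dist_of_cut hc (S := fun z => z ∉ S) hv (by simpa using hu) cut2 hw
    omega
  · intro hw
    exact dist_lt_dist_of_cut hc hu hv cut hw

lemma side_compl_of_cut [Fintype V] {G : SimpleGraph V} (hc : G.Connected) {S : Finset V}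
    {u v : V} (hu : u ∈ S) (hv : v ∉ S)
    (cut : ∀ x y, G.Adj x y → x ∈ S → y ∉ S → x = u ∧ y = v) :
    side G v u = Fintype.card V - S.card := by
  have : side G v u = Sᶜ.card := by
    apply side_eq_card_of_cut hc (S := Sᶜ) (by simpa using hv) (by simpa using hu)
    intro x y hxy hx hy
    simp only [Finset.mem_compl, not_not] at hx hy
    obtain ⟨h1, h2⟩ := cut y x hxy.symm hy hx
    exact ⟨h2, h1⟩
  rw [this, Finset.card_compl]

lemma mu_of_cut [Fintype V] {G : SimpleGraph V} (hc : G.Connected) {S : Finset V}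
    {u v : V} (hu : u ∈ S) (hv : v ∉ S)
    (cut : ∀ x y, G.Adj x y → x ∈ S → y ∉ S → x = u ∧ y = v) :
    mu G u v = min S.card (Fintype.card V - S.card) := by
  rw [mu, side_eq_card_of_cut hc hu hv cut, side_compl_of_cut hc hu hv cut]

lemma ds_adj {n a b : ℕ} {x y : Fin n} :
    (doubleStar n a b).Adj x y ↔ x ≠ y ∧
      ((((x : ℕ) < a ∧ (y : ℕ) = a) ∨
        (a ≤ (x : ℕ) ∧ (x : ℕ) + 1 = y ∧ (y : ℕ) < n - b) ∨
        ((x : ℕ) = n - b - 1 ∧ n - b ≤ (y : ℕ))) ∨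
       (((y : ℕ) < a ∧ (x : ℕ) = a) ∨
        (a ≤ (y : ℕ) ∧ (y : ℕ) + 1 = x ∧ (x : ℕ) < n - b) ∨
        ((y : ℕ) = n - b - 1 ∧ n - b ≤ (x : ℕ)))) := by
  simp [doubleStar, SimpleGraph.fromRel_adj]

lemma ds_connected {n a b : ℕ} (h : a + b + 1 ≤ n) : (doubleStar n a b).Connected := by
  rw [SimpleGraph.connected_iff_exists_forall_reachable]
  have ha : a < n := by omega
  refine ⟨⟨a, ha⟩, ?_⟩
  have hpath : ∀ d : ℕ, ∀ (hd : a + d < n - b),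
      (doubleStar n a b).Reachable ⟨a, ha⟩ ⟨a + d, by omega⟩ := by
    intro d
    induction d with
    | zero => intro _; rfl
    | succ d ih =>
      intro hd
      have h1 : a + d < n - b := by omega
      refine (ih h1).trans (SimpleGraph.Adj.reachable ?_)
      rw [ds_adj]
      constructor
      · intro hh; rw [Fin.ext_iff] at hh; simp at hh <;> omega
      · left; right; left; simp <;> omega
  intro w
  rcases lt_or_ge (w : ℕ) a with hw | hw
  · refine (SimpleGraph.Adj.reachable ?_).symm
    rw [ds_adj]
    constructor
    · intro hh; rw [Fin.ext_iff] at hh; simp at hh <;> omega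
    · left; left; simp <;> omega
  rcases lt_or_ge (w : ℕ) (n - b) with hw2 | hw2
  · have : w = (⟨a + (w - a), by omega⟩ : Fin n) := by rw [Fin.ext_iff]; simp <;> omega
    rw [this]
    exact hpath _ (by omega)
  · have hr := hpath (n - b - 1 - a) (by omega)
    refine hr.trans (SimpleGraph.Adj.reachable ?_)
    rw [ds_adj]
    constructor
    · intro hh; rw [Fin.ext_iff] at hh; simp at hh <;> omega
    · left; right; right; simp <;> omega

lemma card_filter_le {n j : ℕ} (hj : j < n) :
    (Finset.univ.filter fun w : Fin n => (w : ℕ) ≤ j).card = j + 1 := by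
  have : (Finset.univ.filter fun w : Fin n => (w : ℕ) ≤ j) = Finset.Iic ⟨j, hj⟩ := by
    ext w
    simp [Fin.le_def]
  rw [this, Fin.card_Iic]


lemma ds_mu_pendant_left {n a b p : ℕ} (h : a + b + 1 ≤ n) (hp : p < a) :
    mu (doubleStar n a b) ⟨p, by omega⟩ ⟨a, by omega⟩ = 1 := by
  have hc := ds_connected (n := n) (a := a) (b := b) h
  have hv : (⟨a, by omega⟩ : Fin n) ∉ ({(⟨p, by omega⟩ : Fin n)} : Finset (Fin n)) := by
    simp only [Finset.mem_singleton, Fin.ext_iff, Fin.val_mk]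
    omega
  have hcut : ∀ x y, (doubleStar n a b).Adj x y →
      x ∈ ({(⟨p, by omega⟩ : Fin n)} : Finset (Fin n)) →
      y ∉ ({(⟨p, by omega⟩ : Fin n)} : Finset (Fin n)) →
      x = (⟨p, by omega⟩ : Fin n) ∧ y = (⟨a, by omega⟩ : Fin n) := by
    intro x y hxy hx hy
    simp only [Finset.mem_singleton] at hx hy
    subst hx
    refine ⟨rfl, ?_⟩
    rw [ds_adj] at hxy
    obtain ⟨hne, hcase⟩ := hxy
    rw [Fin.ext_iff]
    simp only [Fin.val_mk] at hcase ⊢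
    rcases hcase with ((⟨h1,h2⟩|⟨h1,h2,h3⟩|⟨h1,h2⟩)|(⟨h1,h2⟩|⟨h1,h2,h3⟩|⟨h1,h2⟩)) <;> omega
  rw [mu_of_cut hc (Finset.mem_singleton_self _) hv hcut]
  simp only [Finset.card_singleton, Fintype.card_fin]
  omega

lemma ds_mu_path {n a b j : ℕ} (h : a + b + 1 ≤ n) (hj : a ≤ j) (hj2 : j + 2 ≤ n - b) :
    mu (doubleStar n a b) ⟨j, by omega⟩ ⟨j + 1, by omega⟩ = min (j + 1) (n - (j + 1)) := by
  have hc := ds_connected (n := n) (a := a) (b := b) h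
  have hu : (⟨j, by omega⟩ : Fin n) ∈ Finset.univ.filter (fun w : Fin n => (w : ℕ) ≤ j) := by
    simp
  have hv : (⟨j + 1, by omega⟩ : Fin n) ∉ Finset.univ.filter (fun w : Fin n => (w : ℕ) ≤ j) := by
    simp
  have hcut : ∀ x y, (doubleStar n a b).Adj x y →
      x ∈ Finset.univ.filter (fun w : Fin n => (w : ℕ) ≤ j) →
      y ∉ Finset.univ.filter (fun w : Fin n => (w : ℕ) ≤ j) →
      x = (⟨j, by omega⟩ : Fin n) ∧ y = (⟨j + 1, by omega⟩ : Fin n) := by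
    intro x y hxy hx hy
    simp only [Finset.mem_filter, Finset.mem_univ, true_and, not_le] at hx hy
    rw [ds_adj] at hxy
    obtain ⟨hne, hcase⟩ := hxy
    constructor <;> (rw [Fin.ext_iff]; simp only [Fin.val_mk]) <;>
      rcases hcase with ((⟨h1,h2⟩|⟨h1,h2,h3⟩|⟨h1,h2⟩)|(⟨h1,h2⟩|⟨h1,h2,h3⟩|⟨h1,h2⟩)) <;> omega
  rw [mu_of_cut hc hu hv hcut, card_filter_le (by omega), Fintype.card_fin]

lemma ds_mu_pendant_right {n a b q : ℕ} (h : a + b + 1 ≤ n) (hq : n - b ≤ q) (hq2 : q < n) :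
    mu (doubleStar n a b) ⟨n - b - 1, by omega⟩ ⟨q, by omega⟩ = 1 := by
  have hc := ds_connected (n := n) (a := a) (b := b) h
  rw [mu, min_comm, ← mu]
  have hv : (⟨n - b - 1, by omega⟩ : Fin n) ∉ ({(⟨q, by omega⟩ : Fin n)} : Finset (Fin n)) := by
    simp only [Finset.mem_singleton, Fin.ext_iff, Fin.val_mk]
    omega
  have hcut : ∀ x y, (doubleStar n a b).Adj x y →
      x ∈ ({(⟨q, by omega⟩ : Fin n)} : Finset (Fin n)) →
      y ∉ ({(⟨q, by omega⟩ : Fin n)} : Finset (Fin n)) →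
      x = (⟨q, by omega⟩ : Fin n) ∧ y = (⟨n - b - 1, by omega⟩ : Fin n) := by
    intro x y hxy hx hy
    simp only [Finset.mem_singleton] at hx hy
    subst hx
    refine ⟨rfl, ?_⟩
    rw [ds_adj] at hxy
    obtain ⟨hne, hcase⟩ := hxy
    rw [Fin.ext_iff]
    simp only [Fin.val_mk] at hcase ⊢
    rcases hcase with ((⟨h1,h2⟩|⟨h1,h2,h3⟩|⟨h1,h2⟩)|(⟨h1,h2⟩|⟨h1,h2,h3⟩|⟨h1,h2⟩)) <;> omega
  rw [mu_of_cut hc (Finset.mem_singleton_self _) hv hcut]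
  simp only [Finset.card_singleton, Fintype.card_fin]
  omega


lemma tailSum_eq_card [Fintype V] (G : SimpleGraph V) (n k' : ℕ) :
    tailSum G n k' = (Finset.univ.filter fun e : Sym2 V =>
      e ∈ G.edgeSet ∧ muE G e ∈ Finset.Icc k' (n / 2)).card := by
  unfold tailSum r
  rw [← Finset.card_biUnion]
  · congr 1
    ext e
    simp only [Finset.mem_biUnion, Finset.mem_filter, Finset.mem_univ, true_and]
    constructor
    · rintro ⟨i, hi, he, hmu⟩
      exact ⟨he, hmu ▸ hi⟩
    · rintro ⟨he, hmu⟩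
      exact ⟨muE G e, hmu, he, rfl⟩
  · intro i _ j _ hij
    simp only [Finset.disjoint_left, Finset.mem_filter, Finset.mem_univ, true_and]
    rintro e ⟨_, h1⟩ ⟨_, h2⟩
    exact hij (h1 ▸ h2 ▸ rfl)

def dsEps (n a b : ℕ) (hn : a + b + 1 ≤ n) (t : ℕ) : Sym2 (Fin n) :=
  if h : t < a then s((⟨t, by omega⟩ : Fin n), (⟨a, by omega⟩ : Fin n))
  else if h2 : a ≤ t ∧ t + 2 ≤ n - b then s((⟨t, by omega⟩ : Fin n), (⟨t + 1, by omega⟩ : Fin n))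
  else s((⟨n - b - 1, by omega⟩ : Fin n), (⟨min (t + 1) (n - 1), by omega⟩ : Fin n))

lemma dsEps_lo {n a b t : ℕ} (hn : a + b + 1 ≤ n) (h : t < a) :
    dsEps n a b hn t = s((⟨t, by omega⟩ : Fin n), (⟨a, by omega⟩ : Fin n)) := by
  rw [dsEps, dif_pos h]

lemma dsEps_mid {n a b t : ℕ} (hn : a + b + 1 ≤ n) (h1 : a ≤ t) (h2 : t + 2 ≤ n - b) :
    dsEps n a b hn t = s((⟨t, by omega⟩ : Fin n), (⟨t + 1, by omega⟩ : Fin n)) := by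
  rw [dsEps, dif_neg (by omega), dif_pos ⟨h1, h2⟩]

lemma dsEps_hi {n a b t : ℕ} (hn : a + b + 1 ≤ n) (h1 : a ≤ t) (h2 : n - b ≤ t + 1)
    (h3 : t < n - 1) :
    dsEps n a b hn t = s((⟨n - b - 1, by omega⟩ : Fin n), (⟨t + 1, by omega⟩ : Fin n)) := by
  rw [dsEps, dif_neg (by omega), dif_neg (by omega), Sym2.eq_iff]
  left
  refine ⟨rfl, ?_⟩
  simp only [Fin.mk.injEq]
  omega

lemma dsEps_injOn {n a b : ℕ} (hn : a + b + 1 ≤ n) :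
    Set.InjOn (dsEps n a b hn) (Finset.range (n - 1)) := by
  intro t ht t' ht' heq
  simp only [Finset.coe_range, Set.mem_Iio] at ht ht'
  rcases lt_trichotomy t a with c1 | c1 | c1 <;>
  rcases lt_trichotomy t' a with c2 | c2 | c2 <;>
  [skip; skip; skip; skip; skip; skip; skip; skip; skip] <;>
  · first
    | (rcases le_or_gt (t + 2) (n - b) with d1 | d1 <;>
       rcases le_or_gt (t' + 2) (n - b) with d2 | d2) <;>
      first
      | (rw [dsEps_lo hn (by omega), dsEps_lo hn (by omega)] at heq;
         simp only [Sym2.eq_iff, Fin.mk.injEq] at heq; omega)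
      | (rw [dsEps_lo hn (by omega), dsEps_mid hn (by omega) (by omega)] at heq;
         simp only [Sym2.eq_iff, Fin.mk.injEq] at heq; omega)
      | (rw [dsEps_lo hn (by omega), dsEps_hi hn (by omega) (by omega) (by omega)] at heq;
         simp only [Sym2.eq_iff, Fin.mk.injEq] at heq; omega)
      | (rw [dsEps_mid hn (by omega) (by omega), dsEps_lo hn (by omega)] at heq;
         simp only [Sym2.eq_iff, Fin.mk.injEq] at heq; omega)
      | (rw [dsEps_mid hn (by omega) (by omega), dsEps_mid hn (by omega) (by omega)] at heq;
         simp only [Sym2.eq_iff, Fin.mk.injEq] at heq; omega)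
      | (rw [dsEps_mid hn (by omega) (by omega), dsEps_hi hn (by omega) (by omega) (by omega)] at heq;
         simp only [Sym2.eq_iff, Fin.mk.injEq] at heq; omega)
      | (rw [dsEps_hi hn (by omega) (by omega) (by omega), dsEps_lo hn (by omega)] at heq;
         simp only [Sym2.eq_iff, Fin.mk.injEq] at heq; omega)
      | (rw [dsEps_hi hn (by omega) (by omega) (by omega), dsEps_mid hn (by omega) (by omega)] at heq;
         simp only [Sym2.eq_iff, Fin.mk.injEq] at heq; omega)
      | (rw [dsEps_hi hn (by omega) (by omega) (by omega), dsEps_hi hn (by omega) (by omega) (by omega)] at heq;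
         simp only [Sym2.eq_iff, Fin.mk.injEq] at heq; omega)


lemma muE_mk [Fintype V] (G : SimpleGraph V) (u v : V) : muE G s(u, v) = mu G u v := rfl

lemma dsEps_spec {n a b t : ℕ} (hn : a + b + 1 ≤ n) (ht : t < n - 1) :
    dsEps n a b hn t ∈ (doubleStar n a b).edgeSet ∧
      muE (doubleStar n a b) (dsEps n a b hn t) =
        (if a ≤ t ∧ t + 2 ≤ n - b then min (t + 1) (n - (t + 1)) else 1) := by
  rcases lt_or_ge t a with h | h
  · rw [dsEps_lo hn h, if_neg (by omega)]
    constructor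
    · rw [SimpleGraph.mem_edgeSet, ds_adj]
      refine ⟨?_, Or.inl (Or.inl ⟨?_, ?_⟩)⟩ <;>
        simp only [ne_eq, Fin.mk.injEq, Fin.val_mk] <;> omega
    · rw [muE_mk]
      exact ds_mu_pendant_left hn h
  rcases le_or_gt (t + 2) (n - b) with h2 | h2
  · rw [dsEps_mid hn h h2, if_pos ⟨h, h2⟩]
    constructor
    · rw [SimpleGraph.mem_edgeSet, ds_adj]
      refine ⟨?_, Or.inl (Or.inr (Or.inl ⟨?_, ?_, ?_⟩))⟩ <;>
        simp only [ne_eq, Fin.mk.injEq, Fin.val_mk] <;> omega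
    · rw [muE_mk]
      exact ds_mu_path hn h h2
  · rw [dsEps_hi hn h (by omega) ht, if_neg (by omega)]
    constructor
    · rw [SimpleGraph.mem_edgeSet, ds_adj]
      refine ⟨?_, Or.inl (Or.inr (Or.inr ⟨?_, ?_⟩))⟩ <;>
        simp only [ne_eq, Fin.mk.injEq, Fin.val_mk] <;> omega
    · rw [muE_mk]
      exact ds_mu_pendant_right hn (by omega) (by omega)

lemma dsEps_surj {n a b : ℕ} (hn : a + b + 1 ≤ n) (e : Sym2 (Fin n))
    (he : e ∈ (doubleStar n a b).edgeSet) : ∃ t < n - 1, dsEps n a b hn t = e := by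
  induction e using Sym2.ind with
  | _ x y =>
    rw [SimpleGraph.mem_edgeSet, ds_adj] at he
    obtain ⟨hne, hcase⟩ := he
    have key : ∀ u v : Fin n,
        (((u : ℕ) < a ∧ (v : ℕ) = a) ∨ (a ≤ (u : ℕ) ∧ (u : ℕ) + 1 = v ∧ (v : ℕ) < n - b) ∨
          ((u : ℕ) = n - b - 1 ∧ n - b ≤ (v : ℕ))) →
        ∃ t < n - 1, dsEps n a b hn t = s(u, v) := by
      intro u v hc
      have hu := u.isLt
      have hv := v.isLt
      rcases hc with ⟨h1, h2⟩ | ⟨h1, h2, h3⟩ | ⟨h1, h2⟩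
      · refine ⟨(u : ℕ), by omega, ?_⟩
        rw [dsEps_lo hn h1, Sym2.eq_iff]
        left
        constructor <;> rw [Fin.ext_iff] <;> simp only [Fin.val_mk] <;> omega
      · refine ⟨(u : ℕ), by omega, ?_⟩
        rw [dsEps_mid hn h1 (by omega), Sym2.eq_iff]
        left
        constructor <;> rw [Fin.ext_iff] <;> simp only [Fin.val_mk] <;> omega
      · refine ⟨(v : ℕ) - 1, by omega, ?_⟩
        rw [dsEps_hi hn (by omega) (by omega) (by omega), Sym2.eq_iff]
        left
        constructor <;> rw [Fin.ext_iff] <;> simp only [Fin.val_mk] <;> omega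
    rcases hcase with hc | hc
    · exact key x y hc
    · obtain ⟨t, ht, h⟩ := key y x hc
      exact ⟨t, ht, h.trans Sym2.eq_swap⟩

lemma ds_tailSum {n a b : ℕ} (hn : a + b + 1 ≤ n) (k' : ℕ) :
    tailSum (doubleStar n a b) n k' =
      ((Finset.range (n - 1)).filter fun t =>
        (if a ≤ t ∧ t + 2 ≤ n - b then min (t + 1) (n - (t + 1)) else 1) ∈
          Finset.Icc k' (n / 2)).card := by
  rw [tailSum_eq_card]
  have himg : (Finset.univ.filter fun e : Sym2 (Fin n) =>
      e ∈ (doubleStar n a b).edgeSet ∧ muE (doubleStar n a b) e ∈ Finset.Icc k' (n / 2)) =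
      ((Finset.range (n - 1)).filter fun t =>
        (if a ≤ t ∧ t + 2 ≤ n - b then min (t + 1) (n - (t + 1)) else 1) ∈
          Finset.Icc k' (n / 2)).image (dsEps n a b hn) := by
    ext e
    simp only [Finset.mem_filter, Finset.mem_univ, true_and, Finset.mem_image, Finset.mem_range]
    constructor
    · rintro ⟨he, hmu⟩
      obtain ⟨t, ht, rfl⟩ := dsEps_surj hn e he
      obtain ⟨_, hval⟩ := dsEps_spec hn ht
      exact ⟨t, ⟨ht, hval ▸ hmu⟩, rfl⟩
    · rintro ⟨t, ⟨ht, hval⟩, rfl⟩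
      obtain ⟨hedge, hmu⟩ := dsEps_spec hn ht
      exact ⟨hedge, hmu ▸ hval⟩
  rw [himg, Finset.card_image_of_injOn]
  exact (dsEps_injOn hn).mono (Finset.coe_subset.2 (Finset.filter_subset _ _))

/-- Let `n = n₁ + n_k + k` with `k ≥ 2`, `1 ≤ n₁` and `n₁ + 2 ≤ n_k`. Then
`CP_{n;n₁,n_k} ≺ CP_{n;n₁+1,n_k−1}`. -/
theorem stmt8 (k n₁ nk : ℕ) (hk : 2 ≤ k) (h1 : 1 ≤ n₁) (h2 : n₁ + 2 ≤ nk) :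
    Prec (n₁ + nk + k) (doubleStar (n₁ + nk + k) n₁ nk)
      (doubleStar (n₁ + nk + k) (n₁ + 1) (nk - 1)) := by
  set n : ℕ := n₁ + nk + k with hn
  have hnG : n₁ + nk + 1 ≤ n := by omega
  have hnH : (n₁ + 1) + (nk - 1) + 1 ≤ n := by omega
  set σ : ℕ → ℕ := fun t => if t = n₁ then n₁ + k - 1 else if t = n₁ + k - 1 then n₁ else t
    with hσ
  have hσinj : ∀ t t', σ t = σ t' → t = t' := by
    intro t t' heq
    simp only [hσ] at heq
    split_ifs at heq <;> omega
  have hle : ∀ k', 1 ≤ k' → k' ≤ n / 2 →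
      tailSum (doubleStar n n₁ nk) n k' ≤ tailSum (doubleStar n (n₁ + 1) (nk - 1)) n k' := by
    intro k' hk1 hk2
    rw [ds_tailSum hnG k', ds_tailSum hnH k']
    apply Finset.card_le_card_of_injOn σ
    · intro t ht
      simp only [Finset.mem_coe, Finset.mem_filter, Finset.mem_range, Finset.mem_Icc] at ht ⊢
      simp only [hσ] at ht ⊢
      split_ifs at ht ⊢ <;> omega
    · intro t _ t' _ heq
      exact hσinj t t' heq
  refine ⟨hle, n₁ + 2, by omega, by omega, ?_⟩
  rw [ds_tailSum hnG (n₁ + 2), ds_tailSum hnH (n₁ + 2)]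
  apply Finset.card_lt_card
  rw [Finset.ssubset_iff_of_subset]
  · refine ⟨n₁ + k - 1, ?_, ?_⟩
    · simp only [Finset.mem_filter, Finset.mem_range, Finset.mem_Icc]
      split_ifs <;> omega
    · simp only [Finset.mem_filter, Finset.mem_range, Finset.mem_Icc]
      split_ifs <;> omega
  · intro t ht
    simp only [Finset.mem_filter, Finset.mem_range, Finset.mem_Icc] at ht ⊢
    split_ifs at ht ⊢ <;> omega

end TreeOrder
end

section
/- Let CP_{n,k}^s be the caterpillar tree with respect to the path P_k = v_1⋯v_k, where k ≥ 3, s < k/2 and n − k ≥ 1. Then CP_{n,k}^s ≻ CP_{n,k}^{s+1}. -/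
namespace TreeOrder

attribute [local instance] Classical.propDecidable

variable {V : Type*} {W : Type*}

namespace Aux10

open SimpleGraph Finset

/-- projection to the spine -/
def piF (k p x : ℕ) : ℕ := if x < k then x else p

/-- claimed distance function for the caterpillar with anchor `p = t-1` -/
def DD (k p a b : ℕ) : ℕ :=
  if a = b then 0
  else Nat.dist (piF k p a) (piF k p b) + (if a < k then 0 else 1) + (if b < k then 0 else 1)

variable {n k t : ℕ}

lemma adj_iff (x y : Fin n) :
    (cpOne n k t).Adj x y ↔ x ≠ y ∧
      (((x:ℕ)+1 = (y:ℕ) ∧ (y:ℕ) < k) ∨ ((x:ℕ) = t-1 ∧ k ≤ (y:ℕ)) ∨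
       ((y:ℕ)+1 = (x:ℕ) ∧ (x:ℕ) < k) ∨ ((y:ℕ) = t-1 ∧ k ≤ (x:ℕ))) := by
  simp only [cpOne, SimpleGraph.fromRel_adj]
  tauto

lemma DD_lipschitz (ht1 : 1 ≤ t) (htk : t ≤ k) {x y : Fin n}
    (hxy : (cpOne n k t).Adj x y) (b : ℕ) :
    DD k (t-1) (x:ℕ) b ≤ DD k (t-1) (y:ℕ) b + 1 := by
  rw [adj_iff] at hxy
  obtain ⟨hne, h⟩ := hxy
  have hne' : (x:ℕ) ≠ (y:ℕ) := fun h => hne (Fin.val_injective h)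
  unfold DD piF Nat.dist
  rcases h with ⟨h1, h2⟩ | ⟨h1, h2⟩ | ⟨h1, h2⟩ | ⟨h1, h2⟩ <;> split_ifs <;> omega

lemma adj_path (hkn : k ≤ n) {i : ℕ} (h : i+1 < k) :
    (cpOne n k t).Adj ⟨i, by omega⟩ ⟨i+1, by omega⟩ := by
  rw [adj_iff]
  exact ⟨by simp [Fin.ext_iff], Or.inl ⟨rfl, h⟩⟩

lemma adj_pend (ht1 : 1 ≤ t) (htk : t ≤ k) (hkn : k ≤ n) {j : ℕ} (hj : k ≤ j) (hjn : j < n) :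
    (cpOne n k t).Adj ⟨t-1, by omega⟩ ⟨j, hjn⟩ := by
  rw [adj_iff]
  exact ⟨by simp [Fin.ext_iff]; omega, Or.inr (Or.inl ⟨rfl, hj⟩)⟩

lemma walk_path (hkn : k ≤ n) : ∀ (d i j : ℕ) (hin : i < n) (hjn : j < n), i + d = j → j < k →
    ∃ w : (cpOne n k t).Walk ⟨i, hin⟩ ⟨j, hjn⟩, w.length = d := by
  intro d
  induction d with
  | zero =>
    intro i j hin hjn hij hjk
    obtain rfl : i = j := by omega
    exact ⟨SimpleGraph.Walk.nil, rfl⟩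
  | succ d ih =>
    intro i j hin hjn hij hjk
    have hi1 : i + 1 < n := by omega
    obtain ⟨w, hw⟩ := ih (i+1) j hi1 hjn (by omega) hjk
    exact ⟨SimpleGraph.Walk.cons (adj_path hkn (by omega)) w, by simp [hw]⟩

lemma walk_between (hkn : k ≤ n) {i j : ℕ} (hik : i < k) (hjk : j < k)
    (hin : i < n) (hjn : j < n) :
    ∃ w : (cpOne n k t).Walk ⟨i, hin⟩ ⟨j, hjn⟩, w.length = Nat.dist i j := by
  rcases le_total i j with hij | hij
  · obtain ⟨w, hw⟩ := walk_path hkn (j - i) i j hin hjn (by omega) hjk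
    exact ⟨w, by rw [hw]; unfold Nat.dist; omega⟩
  · obtain ⟨w, hw⟩ := walk_path hkn (i - j) j i hjn hin (by omega) hik
    exact ⟨w.reverse, by rw [SimpleGraph.Walk.length_reverse, hw]; unfold Nat.dist; omega⟩

lemma walk_DD (ht1 : 1 ≤ t) (htk : t ≤ k) (hkn : k ≤ n) (a b : Fin n) :
    ∃ w : (cpOne n k t).Walk a b, w.length = DD k (t-1) (a:ℕ) (b:ℕ) := by
  by_cases hab : a = b
  · subst hab; exact ⟨SimpleGraph.Walk.nil, by simp [DD]⟩
  have hab' : (a:ℕ) ≠ (b:ℕ) := fun h => hab (Fin.val_injective h)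
  have htn : t - 1 < n := by omega
  by_cases hak : (a:ℕ) < k <;> by_cases hbk : (b:ℕ) < k
  · obtain ⟨w, hw⟩ := walk_between (t := t) hkn hak hbk a.isLt b.isLt
    exact ⟨w, by rw [hw]; simp [DD, piF, hab', hak, hbk]⟩
  · -- a on spine, b pendent
    obtain ⟨w, hw⟩ := walk_between (t := t) hkn hak (by omega : t - 1 < k) a.isLt htn
    refine ⟨w.concat ((adj_pend ht1 htk hkn (by omega) b.isLt)), ?_⟩
    rw [SimpleGraph.Walk.length_concat, hw]
    simp [DD, piF, hab', hak, hbk]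
  · obtain ⟨w, hw⟩ := walk_between (t := t) hkn (by omega : t - 1 < k) hbk htn b.isLt
    refine ⟨SimpleGraph.Walk.cons ((adj_pend ht1 htk hkn (by omega) a.isLt)).symm w, ?_⟩
    rw [SimpleGraph.Walk.length_cons, hw]
    simp [DD, piF, hab', hak, hbk]
  · obtain ⟨w, hw⟩ := walk_between (t := t) hkn (by omega : t - 1 < k) (by omega : t - 1 < k) htn htn
    refine ⟨SimpleGraph.Walk.cons ((adj_pend ht1 htk hkn (by omega) a.isLt)).symm
      (w.concat ((adj_pend ht1 htk hkn (by omega) b.isLt))), ?_⟩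
    rw [SimpleGraph.Walk.length_cons, SimpleGraph.Walk.length_concat, hw]
    simp [DD, piF, hab', hak, hbk]

lemma le_of_walk {G : SimpleGraph (Fin n)} (f : Fin n → ℕ)
    (hf : ∀ x y, G.Adj x y → f x ≤ f y + 1) :
    ∀ {a b : Fin n} (w : G.Walk a b), f a ≤ f b + w.length := by
  intro a b w
  induction w with
  | nil => simp
  | cons h w ih =>
    have := hf _ _ h
    simp only [SimpleGraph.Walk.length_cons]
    omega

lemma dist_eq (ht1 : 1 ≤ t) (htk : t ≤ k) (hkn : k ≤ n) (a b : Fin n) :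
    (cpOne n k t).dist a b = DD k (t-1) (a:ℕ) (b:ℕ) := by
  obtain ⟨w, hw⟩ := walk_DD ht1 htk hkn a b
  refine le_antisymm (hw ▸ SimpleGraph.dist_le w) ?_
  obtain ⟨w', hw'⟩ := (SimpleGraph.Walk.reachable w).exists_walk_length_eq_dist
  have h2 := le_of_walk (fun x => DD k (t-1) (x:ℕ) (b:ℕ))
    (fun x y h => DD_lipschitz ht1 htk h (b:ℕ)) w'
  have hbb : DD k (t-1) (b:ℕ) (b:ℕ) = 0 := if_pos rfl
  omega


lemma card_filter_fin (m : ℕ) (P : ℕ → Prop) [DecidablePred P]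
    [DecidablePred fun w : Fin m => P w.val] :
    ((Finset.univ : Finset (Fin m)).filter fun w => P w.val).card
      = ((Finset.range m).filter P).card := by
  refine Finset.card_bij (fun w _ => (w : ℕ)) ?_ ?_ ?_
  · intro a ha
    rw [Finset.mem_filter] at ha
    simp only [Finset.mem_filter, Finset.mem_range]
    exact ⟨a.isLt, ha.2⟩
  · intro a _ b _ h
    exact Fin.val_injective h
  · intro b hb
    simp only [Finset.mem_filter, Finset.mem_range, Finset.mem_univ, true_and] at hb
    exact ⟨⟨b, hb.1⟩, by simpa using hb.2, rfl⟩

lemma side_sum (hn : 0 < n) {G : SimpleGraph (Fin n)} (u v : Fin n)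
    (hnt : ∀ w : Fin n, G.dist w u ≠ G.dist w v) : side G u v + side G v u = n := by
  unfold side
  have h := Finset.card_filter_add_card_filter_not
    (s := (Finset.univ : Finset (Fin n))) (p := fun w : Fin n => G.dist w u < G.dist w v)
  have h2 : (Finset.univ : Finset (Fin n)).filter (fun w => ¬ G.dist w u < G.dist w v)
      = (Finset.univ : Finset (Fin n)).filter (fun w => G.dist w v < G.dist w u) :=
    Finset.filter_congr (fun w _ => by have := hnt w; constructor <;> intro <;> omega)
  rw [h2] at h
  simpa using h

lemma noties_path (ht1 : 1 ≤ t) (htk : t ≤ k) (hkn : k < n) {i : ℕ} (hi : i + 1 < k)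
    (w : Fin n) :
    (cpOne n k t).dist w ⟨i, by omega⟩ ≠ (cpOne n k t).dist w ⟨i+1, by omega⟩ := by
  rw [dist_eq ht1 htk hkn.le, dist_eq ht1 htk hkn.le]
  simp only [Fin.val_mk]
  unfold DD piF Nat.dist
  split_ifs <;> omega

lemma side_path (ht1 : 1 ≤ t) (htk : t ≤ k) (hkn : k < n) {i : ℕ} (hi : i + 1 < k) :
    side (cpOne n k t) ⟨i, by omega⟩ ⟨i+1, by omega⟩
      = (i+1) + (if t-1 ≤ i then n - k else 0) := by
  unfold side
  rw [Finset.filter_congr (q := fun w : Fin n => piF k (t-1) (w:ℕ) ≤ i) ?_]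
  · rw [card_filter_fin n (fun w => piF k (t-1) w ≤ i)]
    by_cases hti : t - 1 ≤ i
    · rw [if_pos hti]
      have he : (Finset.range n).filter (fun w => piF k (t-1) w ≤ i)
          = Finset.range (i+1) ∪ Finset.Ico k n := by
        ext w
        rw [Finset.mem_filter]
        by_cases hw : w < k <;>
          simp only [piF, hw, if_pos, if_neg, Finset.mem_filter, Finset.mem_range,
            Finset.mem_union, Finset.mem_Ico, ite_true, ite_false] <;> omega
      rw [he, Finset.card_union_of_disjoint, Finset.card_range, Nat.card_Ico]
      exact Finset.disjoint_left.mpr fun a ha hb => by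
        simp only [Finset.mem_range] at ha
        simp only [Finset.mem_Ico] at hb
        omega
    · rw [if_neg hti]
      have he : (Finset.range n).filter (fun w => piF k (t-1) w ≤ i) = Finset.range (i+1) := by
        ext w
        rw [Finset.mem_filter]
        by_cases hw : w < k <;>
          simp only [piF, hw, if_pos, if_neg, Finset.mem_filter, Finset.mem_range,
            ite_true, ite_false] <;> omega
      rw [he, Finset.card_range]
  · intro w _
    rw [dist_eq ht1 htk hkn.le, dist_eq ht1 htk hkn.le]
    simp only [Fin.val_mk]
    unfold DD piF Nat.dist
    split_ifs <;> omega

lemma mu_path (ht1 : 1 ≤ t) (htk : t ≤ k) (hkn : k < n) {i : ℕ} (hi : i + 1 < k) :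
    mu (cpOne n k t) ⟨i, by omega⟩ ⟨i+1, by omega⟩
      = min ((i+1) + (if t-1 ≤ i then n - k else 0))
          (n - ((i+1) + (if t-1 ≤ i then n - k else 0))) := by
  have h1 := side_path ht1 htk hkn hi
  have h2 := side_sum (by omega) _ _ (noties_path ht1 htk hkn hi)
  unfold mu
  omega

lemma noties_pend (ht1 : 1 ≤ t) (htk : t ≤ k) (hkn : k < n) {j : ℕ} (hj : k ≤ j) (hjn : j < n)
    (w : Fin n) :
    (cpOne n k t).dist w ⟨j, hjn⟩ ≠ (cpOne n k t).dist w ⟨t-1, by omega⟩ := by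
  rw [dist_eq ht1 htk hkn.le, dist_eq ht1 htk hkn.le]
  simp only [Fin.val_mk]
  unfold DD piF Nat.dist
  split_ifs <;> omega

lemma side_pend (ht1 : 1 ≤ t) (htk : t ≤ k) (hkn : k < n) {j : ℕ} (hj : k ≤ j) (hjn : j < n) :
    side (cpOne n k t) ⟨j, hjn⟩ ⟨t-1, by omega⟩ = 1 := by
  unfold side
  rw [Finset.filter_congr (q := fun w : Fin n => (w:ℕ) = j) ?_]
  · rw [card_filter_fin n (fun w => w = j)]
    rw [Finset.filter_eq' (Finset.range n) j, if_pos (Finset.mem_range.mpr hjn),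
      Finset.card_singleton]
  · intro w _
    rw [dist_eq ht1 htk hkn.le, dist_eq ht1 htk hkn.le]
    simp only [Fin.val_mk]
    unfold DD piF Nat.dist
    split_ifs <;> omega

lemma mu_pend (ht1 : 1 ≤ t) (htk : t ≤ k) (hkn : k < n) {j : ℕ} (hj : k ≤ j) (hjn : j < n) :
    mu (cpOne n k t) ⟨t-1, by omega⟩ ⟨j, hjn⟩ = 1 := by
  have h1 := side_pend ht1 htk hkn hj hjn
  have h2 := side_sum (by omega) _ _ (noties_pend ht1 htk hkn hj hjn)
  unfold mu
  omega


lemma muE_mk [Fintype V] (G : SimpleGraph V) (x y : V) : muE G s(x,y) = mu G x y := rfl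

lemma tailSum_eq [Fintype V] (G : SimpleGraph V) (m κ : ℕ) :
    tailSum G m κ = (Finset.univ.filter fun e : Sym2 V =>
      e ∈ G.edgeSet ∧ muE G e ∈ Finset.Icc κ (m/2)).card := by
  unfold tailSum
  rw [Finset.card_eq_sum_card_fiberwise (f := muE G) (t := Finset.Icc κ (m/2))
    (fun e he => (Finset.mem_filter.mp he).2.2)]
  refine Finset.sum_congr rfl fun i hi => ?_
  unfold r
  rw [Finset.filter_filter]
  refine congrArg Finset.card (Finset.filter_congr fun e _ => ?_)
  constructor
  · rintro ⟨hP, hμ⟩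
    exact ⟨⟨hP, hμ ▸ hi⟩, hμ⟩
  · rintro ⟨⟨hP, _⟩, hμ⟩
    exact ⟨hP, hμ⟩

lemma edge_cases {e : Sym2 (Fin n)} (he : e ∈ (cpOne n k t).edgeSet) :
    ∃ x y : Fin n, e = s(x,y) ∧
      (((x:ℕ)+1 = (y:ℕ) ∧ (y:ℕ) < k) ∨ ((x:ℕ) = t-1 ∧ k ≤ (y:ℕ))) := by
  induction e using Sym2.ind with
  | _ a b =>
    rw [SimpleGraph.mem_edgeSet, adj_iff] at he
    obtain ⟨hne, h⟩ := he
    rcases h with h | h | h | h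
    · exact ⟨a, b, rfl, Or.inl h⟩
    · exact ⟨a, b, rfl, Or.inr h⟩
    · exact ⟨b, a, Sym2.eq_swap, Or.inl h⟩
    · exact ⟨b, a, Sym2.eq_swap, Or.inr h⟩

lemma path_mem {x y : Fin n} (hxy : (x:ℕ)+1 = (y:ℕ)) (hy : (y:ℕ) < k) :
    s(x,y) ∈ (cpOne n k t).edgeSet := by
  rw [SimpleGraph.mem_edgeSet, adj_iff]
  exact ⟨fun h => by rw [h] at hxy; omega, Or.inl ⟨hxy, hy⟩⟩

lemma pend_mem {x y : Fin n} (ht1 : 1 ≤ t) (hx : (x:ℕ) = t-1) (htk : t ≤ k) (hy : k ≤ (y:ℕ)) :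
    s(x,y) ∈ (cpOne n k t).edgeSet := by
  rw [SimpleGraph.mem_edgeSet, adj_iff]
  refine ⟨fun h => ?_, Or.inr (Or.inl ⟨hx, hy⟩)⟩
  rw [h] at hx
  omega

lemma mu_path' (ht1 : 1 ≤ t) (htk : t ≤ k) (hkn : k < n) {x y : Fin n}
    (hxy : (x:ℕ)+1 = (y:ℕ)) (hy : (y:ℕ) < k) :
    mu (cpOne n k t) x y
      = min (((x:ℕ)+1) + (if t-1 ≤ (x:ℕ) then n - k else 0))
          (n - (((x:ℕ)+1) + (if t-1 ≤ (x:ℕ) then n - k else 0))) := by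
  have hyk : (x:ℕ)+1 < k := by omega
  have hy' : y = ⟨(x:ℕ)+1, by omega⟩ := Fin.val_injective (by simp [← hxy])
  rw [hy']
  exact mu_path ht1 htk hkn hyk

lemma mu_pend' (ht1 : 1 ≤ t) (htk : t ≤ k) (hkn : k < n) {x y : Fin n}
    (hx : (x:ℕ) = t-1) (hy : k ≤ (y:ℕ)) :
    mu (cpOne n k t) x y = 1 := by
  have hx' : x = ⟨t-1, by omega⟩ := Fin.val_injective (by simp [hx])
  rw [hx']
  exact mu_pend ht1 htk hkn hy y.isLt


noncomputable def psi (n k : ℕ) (a : Fin n) : Sym2 (Fin n) → Sym2 (Fin n) := fun e =>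
  if h : ∃ y : Fin n, y ∈ e ∧ k ≤ (y:ℕ) then s(a, h.choose) else e

lemma psi_path {n k : ℕ} (a : Fin n) {x y : Fin n} (hx : (x:ℕ) < k) (hy : (y:ℕ) < k) :
    psi n k a s(x,y) = s(x,y) := by
  refine dif_neg ?_
  rintro ⟨z, hz, hk'⟩
  rw [Sym2.mem_iff] at hz
  rcases hz with rfl | rfl <;> omega

lemma psi_pend {n k : ℕ} (a : Fin n) {x y : Fin n} (hx : (x:ℕ) < k) (hy : k ≤ (y:ℕ)) :
    psi n k a s(x,y) = s(a, y) := by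
  have h : ∃ z : Fin n, z ∈ s(x,y) ∧ k ≤ (z:ℕ) := ⟨y, Sym2.mem_mk_right x y, hy⟩
  simp only [psi]
  rw [dif_pos h]
  have hc := h.choose_spec
  rw [Sym2.mem_iff] at hc
  rcases hc with ⟨h1 | h1, h2⟩
  · rw [h1] at h2; omega
  · rw [h1]

lemma key_mapsTo {n k σ : ℕ} (hk : 3 ≤ k) (hs1 : 1 ≤ σ) (hs : 2 * σ < k) (hkn : k < n)
    (κ : ℕ) {e : Sym2 (Fin n)}
    (he : e ∈ (cpOne n k (σ+1)).edgeSet ∧ muE (cpOne n k (σ+1)) e ∈ Finset.Icc κ (n/2)) :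
    psi n k ⟨σ-1, by omega⟩ e ∈ (cpOne n k σ).edgeSet ∧
      muE (cpOne n k σ) (psi n k ⟨σ-1, by omega⟩ e) ∈ Finset.Icc κ (n/2) := by
  obtain ⟨heE, hμ⟩ := he
  obtain ⟨x, y, rfl, hcase⟩ := edge_cases heE
  have ht1a : 1 ≤ σ + 1 := by omega
  have htka : σ + 1 ≤ k := by omega
  rcases hcase with ⟨hxy, hyk⟩ | ⟨hx, hy⟩
  · rw [psi_path _ (by omega) hyk]
    rw [muE_mk, mu_path' ht1a htka hkn hxy hyk, Finset.mem_Icc] at hμ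
    refine ⟨path_mem hxy hyk, ?_⟩
    rw [muE_mk, mu_path' hs1 (by omega) hkn hxy hyk, Finset.mem_Icc]
    split_ifs at hμ ⊢ <;> omega
  · have hxk : (x:ℕ) < k := by omega
    rw [psi_pend _ hxk hy]
    rw [muE_mk, mu_pend' ht1a htka hkn hx hy] at hμ
    refine ⟨pend_mem hs1 rfl (by omega) hy, ?_⟩
    rw [muE_mk, mu_pend' hs1 (by omega) hkn rfl hy]
    exact hμ

lemma key_inj {n k σ : ℕ} (hk : 3 ≤ k) (hs1 : 1 ≤ σ) (hs : 2 * σ < k) (hkn : k < n)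
    {e1 e2 : Sym2 (Fin n)}
    (h1 : e1 ∈ (cpOne n k (σ+1)).edgeSet) (h2 : e2 ∈ (cpOne n k (σ+1)).edgeSet)
    (heq : psi n k ⟨σ-1, by omega⟩ e1 = psi n k ⟨σ-1, by omega⟩ e2) : e1 = e2 := by
  obtain ⟨x1, y1, rfl, hc1⟩ := edge_cases h1
  obtain ⟨x2, y2, rfl, hc2⟩ := edge_cases h2
  rcases hc1 with ⟨hxy1, hyk1⟩ | ⟨hx1, hy1⟩ <;> rcases hc2 with ⟨hxy2, hyk2⟩ | ⟨hx2, hy2⟩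
  · rwa [psi_path _ (by omega) hyk1, psi_path _ (by omega) hyk2] at heq
  · exfalso
    rw [psi_path _ (by omega) hyk1, psi_pend _ (by omega) hy2] at heq
    have hm : y2 ∈ s(x1, y1) := by rw [heq]; exact Sym2.mem_mk_right _ _
    rw [Sym2.mem_iff] at hm
    rcases hm with rfl | rfl <;> omega
  · exfalso
    rw [psi_pend _ (by omega) hy1, psi_path _ (by omega) hyk2] at heq
    have hm : y1 ∈ s(x2, y2) := by rw [← heq]; exact Sym2.mem_mk_right _ _
    rw [Sym2.mem_iff] at hm
    rcases hm with rfl | rfl <;> omega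
  · rw [psi_pend _ (by omega) hy1, psi_pend _ (by omega) hy2] at heq
    rw [Sym2.eq_iff] at heq
    rcases heq with ⟨-, rfl⟩ | ⟨ha, -⟩
    · have hx12 : x1 = x2 := Fin.val_injective (by omega)
      rw [hx12]
    · exfalso
      have := congrArg Fin.val ha
      simp only [Fin.val_mk] at this
      omega

lemma key_le {n k σ : ℕ} (hk : 3 ≤ k) (hs1 : 1 ≤ σ) (hs : 2 * σ < k) (hkn : k < n) (κ : ℕ) :
    tailSum (cpOne n k (σ+1)) n κ ≤ tailSum (cpOne n k σ) n κ := by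
  rw [tailSum_eq, tailSum_eq]
  refine Finset.card_le_card_of_injOn (psi n k ⟨σ-1, by omega⟩) ?_ ?_
  · intro e he
    rw [Finset.mem_coe, Finset.mem_filter] at he
    rw [Finset.mem_coe, Finset.mem_filter]
    exact ⟨Finset.mem_univ _, key_mapsTo hk hs1 hs hkn κ he.2⟩
  · intro e1 h1 e2 h2 heq
    rw [Finset.mem_coe, Finset.mem_filter] at h1 h2
    exact key_inj hk hs1 hs hkn h1.2.1 h2.2.1 heq

lemma key_strict {n k σ : ℕ} (hk : 3 ≤ k) (hs1 : 1 ≤ σ) (hs : 2 * σ < k) (hkn : k < n) :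
    tailSum (cpOne n k (σ+1)) n (σ+1) < tailSum (cpOne n k σ) n (σ+1) := by
  have hσ1n : σ - 1 < n := by omega
  have hσn : σ < n := by omega
  rw [tailSum_eq, tailSum_eq]
  set S1 := Finset.univ.filter (fun e : Sym2 (Fin n) =>
    e ∈ (cpOne n k (σ+1)).edgeSet ∧ muE (cpOne n k (σ+1)) e ∈ Finset.Icc (σ+1) (n/2)) with hS1
  set S2 := Finset.univ.filter (fun e : Sym2 (Fin n) =>
    e ∈ (cpOne n k σ).edgeSet ∧ muE (cpOne n k σ) e ∈ Finset.Icc (σ+1) (n/2)) with hS2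
  have hinj : Set.InjOn (psi n k ⟨σ-1, hσ1n⟩) ↑S1 := by
    intro e1 h1 e2 h2 heq
    rw [hS1, Finset.mem_coe, Finset.mem_filter] at h1 h2
    exact key_inj hk hs1 hs hkn h1.2.1 h2.2.1 heq
  have hsub : S1.image (psi n k ⟨σ-1, hσ1n⟩) ⊆ S2 := by
    intro e' he'
    obtain ⟨e, he, rfl⟩ := Finset.mem_image.mp he'
    rw [hS1, Finset.mem_filter] at he
    rw [hS2, Finset.mem_filter]
    exact ⟨Finset.mem_univ _, key_mapsTo hk hs1 hs hkn (σ+1) he.2⟩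
  have he0E2 : s((⟨σ-1, hσ1n⟩ : Fin n), (⟨σ, hσn⟩ : Fin n)) ∈ (cpOne n k σ).edgeSet :=
    path_mem (show σ-1+1 = σ by omega) (show σ < k by omega)
  have hμ2 : muE (cpOne n k σ) s((⟨σ-1, hσ1n⟩ : Fin n), (⟨σ, hσn⟩ : Fin n))
      = min (σ-1+1 + (n-k)) (n - (σ-1+1 + (n-k))) := by
    rw [muE_mk, mu_path' hs1 (by omega) hkn (show σ-1+1 = σ by omega) (show σ < k by omega)]
    rw [show ((⟨σ-1, hσ1n⟩ : Fin n) : ℕ) = σ-1 from rfl, if_pos (le_refl (σ-1))]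
  have hμ1 : muE (cpOne n k (σ+1)) s((⟨σ-1, hσ1n⟩ : Fin n), (⟨σ, hσn⟩ : Fin n))
      = min (σ-1+1) (n - (σ-1+1)) := by
    rw [muE_mk, mu_path' (by omega) (by omega) hkn (show σ-1+1 = σ by omega)
      (show σ < k by omega)]
    rw [show ((⟨σ-1, hσ1n⟩ : Fin n) : ℕ) = σ-1 from rfl, if_neg (by omega), Nat.add_zero]
  have he0mem : s((⟨σ-1, hσ1n⟩ : Fin n), (⟨σ, hσn⟩ : Fin n)) ∈ S2 := by
    rw [hS2, Finset.mem_filter]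
    refine ⟨Finset.mem_univ _, he0E2, ?_⟩
    rw [hμ2, Finset.mem_Icc]
    omega
  have he0not : s((⟨σ-1, hσ1n⟩ : Fin n), (⟨σ, hσn⟩ : Fin n)) ∉
      S1.image (psi n k ⟨σ-1, hσ1n⟩) := by
    intro hmem
    obtain ⟨e, he, hψe⟩ := Finset.mem_image.mp hmem
    rw [hS1, Finset.mem_filter] at he
    obtain ⟨-, heE, hμ⟩ := he
    obtain ⟨x, y, rfl, hcase⟩ := edge_cases heE
    rcases hcase with ⟨hxy, hyk⟩ | ⟨hx, hy⟩
    · rw [psi_path _ (by omega) hyk] at hψe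
      rw [hψe, hμ1, Finset.mem_Icc] at hμ
      omega
    · rw [psi_pend _ (by omega) hy] at hψe
      have hm : y ∈ s((⟨σ-1, hσ1n⟩ : Fin n), (⟨σ, hσn⟩ : Fin n)) := by
        rw [← hψe]; exact Sym2.mem_mk_right _ _
      rw [Sym2.mem_iff] at hm
      rcases hm with rfl | rfl <;> simp only [Fin.val_mk] at hy <;> omega
  calc S1.card = (S1.image (psi n k ⟨σ-1, hσ1n⟩)).card :=
        (Finset.card_image_of_injOn hinj).symm
    _ < S2.card := Finset.card_lt_card
        ((Finset.ssubset_iff_of_subset hsub).mpr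
          ⟨_, he0mem, he0not⟩)

end Aux10

/-- Let `CP_{n,k}^s` be the caterpillar with respect to `P_k = v₁⋯v_k`, where
`k ≥ 3`, `s < k/2` and `n − k ≥ 1`. Then `CP_{n,k}^s ≻ CP_{n,k}^{s+1}`. -/
theorem stmt10 (n k s : ℕ) (hk : 3 ≤ k) (hs1 : 1 ≤ s) (hs : 2 * s < k)
    (hnk : 1 ≤ n - k) (hkn : k ≤ n) :
    Prec n (cpOne n k (s + 1)) (cpOne n k s) := by
  have hkn' : k < n := by omega
  constructor
  · intro κ _ _
    exact Aux10.key_le hk hs1 hs hkn' κ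
  · exact ⟨s+1, by omega, by omega, Aux10.key_strict hk hs1 hs hkn'⟩

end TreeOrder
end
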